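/- Let m_1, m_2 be positive coprime integers, and let m_1^{-1} be the integer with 1 ≤ m_1^{-1} < m_2 and m_1·m_1^{-1} ≡ 1 (mod m_2), and let m_2^{-1} be the integer with 1 ≤ m_2^{-1} < m_1 and m_2·m_2^{-1} ≡ 1 (mod m_1). Then for every integer k ≥ 0, the number of pairs (x_1,x_2) of nonnegative integers with m_2·x_1 + m_1·x_2 = k equals k/(m_1·m_2) − {m_2^{-1}·k / m_1} − {m_1^{-1}·k / m_2} + 1, where {x} denotes the fractional part of x. -/

import Mathlib

set_option maxHeartbeats 1600000 in
/-- Popoviciu's formula for the denumerant in two coprime parts. -/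
theorem stmt1 (m₁ m₂ a b : ℕ) (hm₁ : 0 < m₁) (hm₂ : 0 < m₂)
    (hco : Nat.Coprime m₁ m₂)
    (ha : 1 ≤ a) (ha' : a < m₂) (hainv : m₁ * a ≡ 1 [MOD m₂])
    (hb : 1 ≤ b) (hb' : b < m₁) (hbinv : m₂ * b ≡ 1 [MOD m₁])
    (k : ℕ) :
    (Set.ncard {p : ℤ × ℤ | 0 ≤ p.1 ∧ 0 ≤ p.2 ∧
        (m₂ : ℤ) * p.1 + (m₁ : ℤ) * p.2 = (k : ℤ)} : ℝ) =
      (k : ℝ) / ((m₁ : ℝ) * m₂) - Int.fract ((b * k : ℝ) / m₁)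
        - Int.fract ((a * k : ℝ) / m₂) + 1 := by
  have hm₁2 : 2 ≤ m₁ := by omega
  have hm₂2 : 2 ≤ m₂ := by omega
  obtain ⟨s, hs⟩ : ∃ s, m₂ * b = m₁ * s + 1 := by
    have h : (m₂ * b) % m₁ = 1 % m₁ := hbinv
    have h1 : 1 % m₁ = 1 := Nat.mod_eq_of_lt (by omega)
    have h2 := Nat.div_add_mod (m₂ * b) m₁
    exact ⟨(m₂ * b) / m₁, by omega⟩
  obtain ⟨u, hu⟩ : ∃ u, m₁ * a = m₂ * u + 1 := by
    have h : (m₁ * a) % m₂ = 1 % m₂ := hainv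
    have h1 : 1 % m₂ = 1 := Nat.mod_eq_of_lt (by omega)
    have h2 := Nat.div_add_mod (m₁ * a) m₂
    exact ⟨(m₁ * a) / m₂, by omega⟩
  set r₁ : ℕ := b * k % m₁ with hr₁def
  set r₂ : ℕ := a * k % m₂ with hr₂def
  set q₁ : ℕ := b * k / m₁ with hq₁def
  set q₂ : ℕ := a * k / m₂ with hq₂def
  have e₁n : m₁ * q₁ + r₁ = b * k := Nat.div_add_mod (b * k) m₁
  have e₂n : m₂ * q₂ + r₂ = a * k := Nat.div_add_mod (a * k) m₂
  have hr₁lt : r₁ < m₁ := Nat.mod_lt _ hm₁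
  have hr₂lt : r₂ < m₂ := Nat.mod_lt _ hm₂
  clear_value r₁ r₂ q₁ q₂
  have e₁ : (m₁:ℤ) * q₁ + r₁ = b * k := by exact_mod_cast e₁n
  have e₂ : (m₂:ℤ) * q₂ + r₂ = a * k := by exact_mod_cast e₂n
  have es : (m₂:ℤ) * b = m₁ * s + 1 := by exact_mod_cast hs
  have eu : (m₁:ℤ) * a = m₂ * u + 1 := by exact_mod_cast hu
  have hcm : IsCoprime (m₁:ℤ) (m₂:ℤ) := by
    rw [Nat.isCoprime_iff_coprime]; exact hco
  have hm₁0 : (m₁:ℤ) ≠ 0 := by positivity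
  have hm₂0 : (m₂:ℤ) ≠ 0 := by positivity
  have hdvd : ((m₁:ℤ) * m₂) ∣ ((k:ℤ) - m₂ * r₁ - m₁ * r₂) := by
    refine hcm.mul_dvd ⟨m₂ * q₁ - s * k - r₂, ?_⟩ ⟨m₁ * q₂ - u * k - r₁, ?_⟩
    · linear_combination -(m₂:ℤ) * e₁ - (k:ℤ) * es
    · linear_combination -(m₁:ℤ) * e₂ - (k:ℤ) * eu
  obtain ⟨N, hN⟩ := hdvd
  have hr₁lt' : (r₁:ℤ) < m₁ := by exact_mod_cast hr₁lt
  have hr₂lt' : (r₂:ℤ) < m₂ := by exact_mod_cast hr₂lt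
  have hr₁0 : (0:ℤ) ≤ r₁ := by positivity
  have hr₂0 : (0:ℤ) ≤ r₂ := by positivity
  have hk0 : (0:ℤ) ≤ k := by positivity
  have hm₁p : (0:ℤ) < m₁ := by exact_mod_cast hm₁
  have hm₂p : (0:ℤ) < m₂ := by exact_mod_cast hm₂
  have hNge : -1 ≤ N := by
    by_contra hcon
    push_neg at hcon
    have h2 : N ≤ -2 := by omega
    have h3 : (m₁:ℤ) * m₂ * N ≤ (m₁:ℤ) * m₂ * (-2) :=
      mul_le_mul_of_nonneg_left h2 (mul_pos hm₁p hm₂p).le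
    have h4 : (m₂:ℤ) * r₁ < m₂ * m₁ := by
      exact mul_lt_mul_of_pos_left hr₁lt' hm₂p
    have h5 : (m₁:ℤ) * r₂ < m₁ * m₂ := by
      exact mul_lt_mul_of_pos_left hr₂lt' hm₁p
    nlinarith [hN]
  have hinj : Function.Injective
      (fun t : ℤ => ((r₁:ℤ) + m₁ * t, (r₂:ℤ) + m₂ * (N - t))) := by
    intro x y h
    have h1 : (r₁:ℤ) + m₁ * x = r₁ + m₁ * y := congrArg Prod.fst h
    have h2 : (m₁:ℤ) * x = m₁ * y := by linarith
    exact mul_left_cancel₀ hm₁0 h2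
  have hS : {p : ℤ × ℤ | 0 ≤ p.1 ∧ 0 ≤ p.2 ∧
        (m₂ : ℤ) * p.1 + (m₁ : ℤ) * p.2 = (k : ℤ)} =
      (fun t : ℤ => ((r₁:ℤ) + m₁ * t, (r₂:ℤ) + m₂ * (N - t))) '' (Set.Icc 0 N) := by
    ext ⟨p1, p2⟩
    simp only [Set.mem_setOf_eq, Set.mem_image, Set.mem_Icc, Prod.mk.injEq]
    constructor
    · rintro ⟨h1, h2, h3⟩
      have hd1 : (m₁:ℤ) ∣ (m₂:ℤ) * (p1 - r₁) := by
        refine ⟨m₂ * N + r₂ - p2, ?_⟩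
        linear_combination h3 + hN
      obtain ⟨t, ht⟩ := hcm.dvd_of_dvd_mul_left hd1
      have ht0 : 0 ≤ t := by
        by_contra hc
        push_neg at hc
        have hc1 : t ≤ -1 := by omega
        have : (m₁:ℤ) * t ≤ m₁ * (-1) := mul_le_mul_of_nonneg_left hc1 hm₁p.le
        linarith
      have hp2 : p2 = (r₂:ℤ) + m₂ * (N - t) := by
        have hmul : (m₁:ℤ) * ((r₂:ℤ) + m₂ * (N - t)) = m₁ * p2 := by
          linear_combination -hN + (m₂:ℤ) * ht - h3
        exact (mul_left_cancel₀ hm₁0 hmul).symm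
      have htN : t ≤ N := by
        by_contra hc
        push_neg at hc
        have hc1 : N - t ≤ -1 := by omega
        have : (m₂:ℤ) * (N - t) ≤ m₂ * (-1) := mul_le_mul_of_nonneg_left hc1 hm₂p.le
        linarith
      exact ⟨t, ⟨ht0, htN⟩, by linarith, hp2.symm⟩
    · rintro ⟨t, ⟨ht0, htN⟩, h1, h2⟩
      subst h1; subst h2
      refine ⟨?_, ?_, ?_⟩
      · have := mul_nonneg hm₁p.le ht0
        linarith
      · have := mul_nonneg hm₂p.le (by linarith : (0:ℤ) ≤ N - t)
        linarith
      · linear_combination -hN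
  rw [hS, Set.ncard_image_of_injective _ hinj, ← Finset.coe_Icc,
    Set.ncard_coe_finset, Int.card_Icc]
  have hcast : (((N + 1 - 0).toNat : ℕ) : ℝ) = (N:ℝ) + 1 := by
    have h := Int.toNat_of_nonneg (show (0:ℤ) ≤ N + 1 - 0 by omega)
    have h2 := congrArg (Int.cast : ℤ → ℝ) h
    push_cast at h2 ⊢
    linarith
  rw [hcast]
  have hm₁R : (0:ℝ) < m₁ := by exact_mod_cast hm₁
  have hm₂R : (0:ℝ) < m₂ := by exact_mod_cast hm₂
  have hf₁ : Int.fract ((b * k : ℝ) / m₁) = (r₁:ℝ) / m₁ := by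
    have e₁R : (m₁:ℝ) * q₁ + r₁ = b * k := by exact_mod_cast e₁n
    have e : (b * k : ℝ) / m₁ = ((q₁:ℤ) : ℝ) + (r₁:ℝ) / m₁ := by
      field_simp
      push_cast
      linarith
    rw [e, Int.fract_intCast_add, Int.fract_eq_self.mpr
      ⟨by positivity, by rw [div_lt_one hm₁R]; exact_mod_cast hr₁lt⟩]
  have hf₂ : Int.fract ((a * k : ℝ) / m₂) = (r₂:ℝ) / m₂ := by
    have e₂R : (m₂:ℝ) * q₂ + r₂ = a * k := by exact_mod_cast e₂n
    have e : (a * k : ℝ) / m₂ = ((q₂:ℤ) : ℝ) + (r₂:ℝ) / m₂ := by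
      field_simp
      push_cast
      linarith
    rw [e, Int.fract_intCast_add, Int.fract_eq_self.mpr
      ⟨by positivity, by rw [div_lt_one hm₂R]; exact_mod_cast hr₂lt⟩]
  rw [hf₁, hf₂]
  have hNR : (k:ℝ) - m₂ * r₁ - m₁ * r₂ = m₁ * m₂ * N := by exact_mod_cast hN
  field_simp
  linear_combination (-1:ℝ) * hNR
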